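/- Let A be an n×n complex matrix. If there exist complex numbers c_1,...,c_n such that |a_{i,i} - c_i| > Σ_{j≠i} |a_{i,j} - c_i| for all i ∈ [n], then rank(A) ≥ n - 1. -/

import Mathlib

open Matrix

lemma matrix_rank_add_le {m n : ℕ} (A B : Matrix (Fin m) (Fin n) ℂ) :
    (A + B).rank ≤ A.rank + B.rank := by
  rw [Matrix.rank, Matrix.rank, Matrix.rank, Matrix.mulVecLin_add]
  calc Module.finrank ℂ ↥(LinearMap.range (A.mulVecLin + B.mulVecLin))
      ≤ Module.finrank ℂ ↥(LinearMap.range A.mulVecLin ⊔ LinearMap.range B.mulVecLin) := by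
        apply Submodule.finrank_mono
        rintro x ⟨y, rfl⟩
        exact Submodule.add_mem_sup ⟨y, rfl⟩ ⟨y, rfl⟩
    _ ≤ _ := Submodule.finrank_add_le_finrank_add_finrank _ _

theorem rank_ge_sub_one_of_shifted_diag_dominant (n : ℕ) (A : Matrix (Fin n) (Fin n) ℂ)
    (c : Fin n → ℂ)
    (h : ∀ i : Fin n,
      ∑ j ∈ Finset.univ.erase i, ‖A i j - c i‖ < ‖A i i - c i‖) :
    n - 1 ≤ A.rank := by
  set E : Matrix (Fin n) (Fin n) ℂ := Matrix.vecMulVec (fun i => -(c i)) (fun _ => 1) with hE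
  set D : Matrix (Fin n) (Fin n) ℂ := A + E with hD
  have hDentry : ∀ i j, D i j = A i j - c i := by
    intro i j
    simp [hD, hE, Matrix.vecMulVec_apply, sub_eq_add_neg]
  have hdet : D.det ≠ 0 := by
    apply det_ne_zero_of_sum_row_lt_diag
    intro k
    simpa [hDentry] using h k
  have hrD : D.rank = n := by
    rw [Matrix.rank_of_isUnit D ((Matrix.isUnit_iff_isUnit_det D).2 (isUnit_iff_ne_zero.2 hdet))]
    simp
  have hrE : E.rank ≤ 1 := by
    rw [hE, Matrix.vecMulVec_eq Unit]
    calc (Matrix.replicateCol Unit (fun i => -(c i)) * Matrix.replicateRow Unit (fun _ => (1 : ℂ))).rank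
        ≤ (Matrix.replicateCol Unit (fun i => -(c i))).rank := Matrix.rank_mul_le_left _ _
      _ ≤ Fintype.card Unit := Matrix.rank_le_card_width _
      _ = 1 := by simp
  have := matrix_rank_add_le A E
  rw [← hD, hrD] at this
  omega
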